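/- arXiv:2203.09422 — 2 statements merged into one kernel-verified Lean document; each statement's English description precedes it below -/
import Mathlib

section
/- If μ is a t-strongly log-concave probability measure on ℝⁿ (i.e., dμ = e^{-V}dx with ∇²V ≥ t·Id for some t > 0), then for every measurable set S with μ(S) > 0 and every r > 0, μ((S_r)^c) ≤ (1/μ(S))·exp(-t r²/4), where S_r = {x : d(x,S) ≤ r} is the Euclidean r-extension of S. -/
open MeasureTheory Set
open scoped ENNReal Pointwise

/-- Abstract "Prékopa–Leindler property" of a measure with a midpoint operation. -/
def IsPL {α : Type*} [MeasurableSpace α] (μ : Measure α) (m : α → α → α) : Prop :=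
  ∀ f g h : α → ℝ≥0∞, Measurable f → Measurable g → Measurable h →
    (∀ x y, f x * g y ≤ (h (m x y)) ^ 2) →
    (∫⁻ x, f x ∂μ) * (∫⁻ x, g x ∂μ) ≤ (∫⁻ x, h x ∂μ) ^ 2

theorem IsPL.of_equiv {α β : Type*} [MeasurableSpace α] [MeasurableSpace β]
    {μ : Measure α} {ν : Measure β} {mα : α → α → α} {mβ : β → β → β}
    (e : α ≃ᵐ β) (he : MeasurePreserving e μ ν)
    (hm : ∀ x y : α, mβ (e x) (e y) = e (mα x y)) (H : IsPL μ mα) : IsPL ν mβ := by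
  intro f g h hf hg hh hyp
  have hfi : ∫⁻ x, f x ∂ν = ∫⁻ x, f (e x) ∂μ := (he.lintegral_comp hf).symm
  have hgi : ∫⁻ x, g x ∂ν = ∫⁻ x, g (e x) ∂μ := (he.lintegral_comp hg).symm
  have hhi : ∫⁻ x, h x ∂ν = ∫⁻ x, h (e x) ∂μ := (he.lintegral_comp hh).symm
  rw [hfi, hgi, hhi]
  exact H _ _ _ (hf.comp e.measurable) (hg.comp e.measurable) (hh.comp e.measurable)
    (fun x y => by rw [← hm]; exact hyp (e x) (e y))

theorem IsPL.prod {α β : Type*} [MeasurableSpace α] [MeasurableSpace β]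
    {μ : Measure α} {ν : Measure β} [SigmaFinite μ] [SigmaFinite ν]
    {mα : α → α → α} {mβ : β → β → β}
    (hA : IsPL μ mα) (hB : IsPL ν mβ) :
    IsPL (μ.prod ν) (fun p q => (mα p.1 q.1, mβ p.2 q.2)) := by
  intro f g h hf hg hh hyp
  set F : α → ℝ≥0∞ := fun a => ∫⁻ b, f (a, b) ∂ν with hF
  set G : α → ℝ≥0∞ := fun a => ∫⁻ b, g (a, b) ∂ν with hG
  set H : α → ℝ≥0∞ := fun a => ∫⁻ b, h (a, b) ∂ν with hH
  have hFm : Measurable F := hf.lintegral_prod_right'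
  have hGm : Measurable G := hg.lintegral_prod_right'
  have hHm : Measurable H := hh.lintegral_prod_right'
  have key : ∀ x y, F x * G y ≤ (H (mα x y)) ^ 2 := by
    intro x y
    exact hB _ _ _ (hf.comp measurable_prodMk_left) (hg.comp measurable_prodMk_left)
      (hh.comp measurable_prodMk_left) (fun b b' => hyp (x, b) (y, b'))
  have := hA F G H hFm hGm hHm key
  rwa [hF, hG, hH, ← lintegral_prod _ hf.aemeasurable, ← lintegral_prod _ hg.aemeasurable,
    ← lintegral_prod _ hh.aemeasurable] at this

theorem bm_one_dim {K L : Set ℝ} (hK : IsCompact K) (hL : IsCompact L)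
    (hKne : K.Nonempty) (hLne : L.Nonempty) :
    volume K + volume L ≤ volume (K + L) := by
  obtain ⟨a, haK, ha⟩ := hK.exists_isGreatest hKne
  obtain ⟨b, hbL, hb⟩ := hL.exists_isLeast hLne
  set X : Set ℝ := a +ᵥ L with hX
  set Y : Set ℝ := b +ᵥ K with hY
  have hXm : MeasurableSet X := (hL.vadd a).measurableSet
  have hXsub : X ⊆ K + L := by
    rintro - ⟨y, hy, rfl⟩; exact Set.add_mem_add haK hy
  have hYsub : Y ⊆ K + L := by
    rintro - ⟨x, hx, rfl⟩; exact Set.mem_of_eq_of_mem (add_comm b x) (Set.add_mem_add hx hbL)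
  have hinter : Y ∩ X ⊆ {a + b} := by
    rintro z ⟨⟨x, hx, rfl⟩, ⟨y, hy, hyz⟩⟩
    have h1 : b + x ≤ a + b := by
      have := ha hx; linarith
    have h2 : a + b ≤ a + y := by
      have := hb hy; linarith
    simp only [Set.mem_singleton_iff, vadd_eq_add]
    have heq : b + x = a + y := by simpa [vadd_eq_add, add_comm] using hyz.symm
    linarith
  calc volume K + volume L = volume Y + volume X := by rw [measure_vadd, measure_vadd]
    _ = volume (Y ∪ X) + volume (Y ∩ X) := (measure_union_add_inter Y hXm).symm
    _ ≤ volume (K + L) + volume ({a + b} : Set ℝ) :=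
        add_le_add (measure_mono (Set.union_subset hYsub hXsub)) (measure_mono hinter)
    _ = volume (K + L) := by simp

theorem half_add_le {A B C : Set ℝ} (hA : MeasurableSet A)
    (hB : MeasurableSet B) (hAne : A.Nonempty) (hBne : B.Nonempty)
    (hsub : ∀ x ∈ A, ∀ y ∈ B, (2 : ℝ)⁻¹ * (x + y) ∈ C) :
    volume A + volume B ≤ 2 * volume C := by
  obtain ⟨a₀, ha₀⟩ := hAne
  obtain ⟨b₀, hb₀⟩ := hBne
  have key : ∀ K, K ⊆ A ∧ IsCompact K → ∀ L, L ⊆ B ∧ IsCompact L →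
      volume K + volume L ≤ 2 * volume C := by
    rintro K ⟨hKA, hK⟩ L ⟨hLB, hL⟩
    set K' := insert a₀ K with hK'
    set L' := insert b₀ L with hL'
    have hK'c : IsCompact K' := hK.insert a₀
    have hL'c : IsCompact L' := hL.insert b₀
    have hK'A : K' ⊆ A := Set.insert_subset ha₀ hKA
    have hL'B : L' ⊆ B := Set.insert_subset hb₀ hLB
    have hhalf : (2 : ℝ)⁻¹ • (K' + L') ⊆ C := by
      rintro - ⟨z, ⟨x, hx, y, hy, rfl⟩, rfl⟩
      exact hsub x (hK'A hx) y (hL'B hy)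
    have hvol : volume ((2:ℝ)⁻¹ • (K' + L')) = ENNReal.ofReal 2⁻¹ * volume (K' + L') := by
      rw [Measure.addHaar_smul]
      congr 2
      rw [Module.finrank_self, pow_one, abs_of_pos]
      norm_num
    have htwo : (2 : ℝ≥0∞) * ENNReal.ofReal 2⁻¹ = 1 := by
      rw [show (2 : ℝ≥0∞) = ENNReal.ofReal 2 by simp,
        ← ENNReal.ofReal_mul (by norm_num)]
      norm_num
    have hbm := bm_one_dim hK'c hL'c ⟨a₀, Set.mem_insert _ _⟩ ⟨b₀, Set.mem_insert _ _⟩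
    calc volume K + volume L ≤ volume K' + volume L' := by
          gcongr <;> [exact Set.subset_insert _ _; exact Set.subset_insert _ _]
      _ ≤ volume (K' + L') := hbm
      _ = 2 * volume ((2:ℝ)⁻¹ • (K' + L')) := by
          rw [hvol, ← mul_assoc, htwo, one_mul]
      _ ≤ 2 * volume C := by gcongr
  have hAs : volume A = ⨆ K, ⨆ (_ : K ⊆ A ∧ IsCompact K), volume K := by
    rw [hA.measure_eq_iSup_isCompact]; simp [iSup_and]
  have hBs : volume B = ⨆ L, ⨆ (_ : L ⊆ B ∧ IsCompact L), volume L := by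
    rw [hB.measure_eq_iSup_isCompact]; simp [iSup_and]
  rw [hAs, hBs]
  exact ENNReal.biSup_add_biSup_le' ⟨{a₀}, Set.singleton_subset_iff.2 ha₀, isCompact_singleton⟩
    ⟨{b₀}, Set.singleton_subset_iff.2 hb₀, isCompact_singleton⟩ key

section OneDim

/-- Normalized 1-d Prékopa–Leindler: additive form. -/
theorem pl_one_norm {f g h : ℝ → ℝ≥0∞}
    (hf : Measurable f) (hg : Measurable g) (hh : Measurable h)
    (hf1 : ∀ x, f x ≤ 1) (hg1 : ∀ x, g x ≤ 1) (hh1 : ∀ x, h x ≤ 1)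
    (hfs : ∀ s : ℝ≥0∞, s < 1 → ∃ x, s < f x)
    (hgs : ∀ s : ℝ≥0∞, s < 1 → ∃ x, s < g x)
    (hyp : ∀ x y, f x * g y ≤ (h ((2:ℝ)⁻¹ * (x + y))) ^ 2) :
    (∫⁻ x, f x) + (∫⁻ x, g x) ≤ 2 * ∫⁻ x, h x := by
  -- layer cake representations
  have layer : ∀ (u : ℝ → ℝ≥0∞), Measurable u → (∀ x, u x ≤ 1) →
      ∫⁻ x, u x = ∫⁻ s in Ioo (0:ℝ) 1, volume {a : ℝ | ENNReal.ofReal s < u a} := by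
    intro u hu hu1
    have hne : ∀ x, u x ≠ ∞ := fun x => (lt_of_le_of_lt (hu1 x) (by norm_num)).ne
    have hrepr : ∀ x, u x = ENNReal.ofReal ((u x).toReal) := fun x =>
      (ENNReal.ofReal_toReal (hne x)).symm
    have humble : Measurable fun x => (u x).toReal := hu.ennreal_toReal
    calc ∫⁻ x, u x = ∫⁻ x, ENNReal.ofReal ((u x).toReal) := by
          exact lintegral_congr fun x => hrepr x
      _ = ∫⁻ s in Ioi (0:ℝ), volume {a : ℝ | s < (u a).toReal} :=
          lintegral_eq_lintegral_meas_lt volume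
            (Filter.Eventually.of_forall fun x => ENNReal.toReal_nonneg) humble.aemeasurable
      _ = ∫⁻ s in Ioi (0:ℝ), (Ioo (0:ℝ) 1).indicator
            (fun s => volume {a : ℝ | s < (u a).toReal}) s := by
          apply setLIntegral_congr_fun measurableSet_Ioi
          intro s hs
          rcases lt_or_ge s 1 with hs1 | hs1
          · rw [Set.indicator_of_mem (by exact ⟨hs, hs1⟩)]
          · rw [Set.indicator_of_notMem (by simp [hs1, not_lt, le_of_lt])]
            have : {a : ℝ | s < (u a).toReal} = ∅ := by
              ext a
              simp only [mem_setOf_eq, mem_empty_iff_false, iff_false, not_lt]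
              exact le_trans (by simpa using ENNReal.toReal_mono (by norm_num) (hu1 a)) hs1
            simp [this]
      _ = ∫⁻ s in Ioo (0:ℝ) 1, volume {a : ℝ | s < (u a).toReal} := by
          rw [lintegral_indicator measurableSet_Ioo, Measure.restrict_restrict measurableSet_Ioo]
          congr 1
          rw [Set.inter_eq_left.2 (fun s hs => hs.1)]
      _ = ∫⁻ s in Ioo (0:ℝ) 1, volume {a : ℝ | ENNReal.ofReal s < u a} := by
          apply setLIntegral_congr_fun measurableSet_Ioo
          intro s hs
          dsimp only
          congr 1
          ext a
          simp only [mem_setOf_eq]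
          rw [ENNReal.ofReal_lt_iff_lt_toReal (le_of_lt hs.1) (hne a)]
  -- antitone measurability
  have meas_level : ∀ (u : ℝ → ℝ≥0∞), Measurable u →
      Measurable fun s : ℝ => volume {a : ℝ | ENNReal.ofReal s < u a} := by
    intro u hu
    have : Antitone fun s : ℝ => volume {a : ℝ | ENNReal.ofReal s < u a} := by
      intro s₁ s₂ hs
      apply measure_mono
      intro a ha
      exact lt_of_le_of_lt (ENNReal.ofReal_le_ofReal hs) ha
    exact this.measurable
  rw [layer f hf hf1, layer g hg hg1, layer h hh hh1,
    ← lintegral_add_left (meas_level f hf) _]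
  rw [← lintegral_const_mul 2 (meas_level h hh)]
  apply lintegral_mono_ae
  apply (ae_restrict_iff' measurableSet_Ioo).2
  apply Filter.Eventually.of_forall
  intro s hs
  -- key: the level sets satisfy the midpoint inclusion
  set A := {a : ℝ | ENNReal.ofReal s < f a} with hA
  set B := {a : ℝ | ENNReal.ofReal s < g a} with hB
  set C := {a : ℝ | ENNReal.ofReal s < h a} with hC
  have hs0 : (0:ℝ) < s := hs.1
  have hs1' : ENNReal.ofReal s < 1 := by
    rw [show (1:ℝ≥0∞) = ENNReal.ofReal 1 by simp]
    exact ENNReal.ofReal_lt_ofReal_iff_of_nonneg (le_of_lt hs0) |>.2 hs.2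
  have hAne : A.Nonempty := hfs _ hs1'
  have hBne : B.Nonempty := hgs _ hs1'
  have hAm : MeasurableSet A := measurableSet_lt measurable_const hf
  have hBm : MeasurableSet B := measurableSet_lt measurable_const hg
  have hsub : ∀ x ∈ A, ∀ y ∈ B, (2:ℝ)⁻¹ * (x + y) ∈ C := by
    intro x hx y hy
    simp only [hC, mem_setOf_eq]
    by_contra hcon
    push_neg at hcon
    have h2 : (h ((2:ℝ)⁻¹ * (x + y)))^2 ≤ (ENNReal.ofReal s)^2 := pow_le_pow_left' hcon 2
    have h3 : (ENNReal.ofReal s)^2 < f x * g y := by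
      have hx' : ENNReal.ofReal s < f x := hx
      have hy' : ENNReal.ofReal s < g y := hy
      have hfin : ENNReal.ofReal s ≠ ∞ := ENNReal.ofReal_ne_top
      have h0 : ENNReal.ofReal s ≠ 0 := by
        simp [ENNReal.ofReal_eq_zero, not_le, hs0]
      calc (ENNReal.ofReal s)^2 = ENNReal.ofReal s * ENNReal.ofReal s := sq (ENNReal.ofReal s) ▸ rfl
        _ < f x * ENNReal.ofReal s := by
            exact (ENNReal.mul_lt_mul_iff_left h0 hfin).2 hx'
        _ ≤ f x * g y := mul_le_mul_right (le_of_lt hy') _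
    exact absurd ((h3.trans_le (hyp x y)).trans_le h2) (lt_irrefl _)
  have := half_add_le hAm hBm hAne hBne hsub
  exact this

end OneDim
theorem ennreal_amgm (x y : ℝ≥0∞) : 4 * (x * y) ≤ (x + y) ^ 2 := by
  wlog hxy : x ≤ y with H
  · rw [mul_comm x y, add_comm x y]; exact H y x (le_of_not_ge hxy)
  obtain ⟨d, rfl⟩ := exists_add_of_le hxy
  calc 4 * (x * (x + d)) = 4 * (x * x) + 4 * (x * d) := by ring
    _ ≤ 4 * (x * x) + 4 * (x * d) + d * d := le_self_add
    _ = (x + (x + d)) ^ 2 := by ring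

theorem ennreal_min_sq (u : ℝ≥0∞) : (min u 1) ^ 2 = min (u ^ 2) 1 := by
  rcases le_total u 1 with hu | hu
  · rw [min_eq_left hu, min_eq_left (by calc u^2 ≤ 1^2 := pow_le_pow_left' hu 2
      _ = 1 := one_pow 2)]
  · rw [min_eq_right hu, min_eq_right (by calc (1:ℝ≥0∞) = 1^2 := (one_pow 2).symm
      _ ≤ u^2 := pow_le_pow_left' hu 2), one_pow]

theorem ennreal_iSup_min_nat (a : ℝ≥0∞) : ⨆ k : ℕ, min a (k : ℝ≥0∞) = a := by
  apply le_antisymm (iSup_le fun k => min_le_left _ _)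
  rcases eq_top_or_lt_top a with ha | ha
  · subst ha
    calc ⊤ = ⨆ k : ℕ, (k : ℝ≥0∞) := ENNReal.iSup_natCast.symm
      _ ≤ ⨆ k : ℕ, min ⊤ (k : ℝ≥0∞) := by gcongr with k; simp
  · obtain ⟨k, hk⟩ := ENNReal.exists_nat_gt ha.ne
    calc a = min a k := (min_eq_left hk.le).symm
      _ ≤ ⨆ k : ℕ, min a (k : ℝ≥0∞) := le_iSup (fun k : ℕ => min a (k : ℝ≥0∞)) k

/-- Bounded 1-d Prékopa–Leindler. -/
theorem pl_one_bdd {f g h : ℝ → ℝ≥0∞}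
    (hf : Measurable f) (hg : Measurable g) (hh : Measurable h)
    (N : ℝ≥0∞) (hN : N ≠ ∞) (hfb : ∀ x, f x ≤ N) (hgb : ∀ x, g x ≤ N)
    (hyp : ∀ x y, f x * g y ≤ (h ((2:ℝ)⁻¹ * (x + y))) ^ 2) :
    (∫⁻ x, f x) * (∫⁻ x, g x) ≤ (∫⁻ x, h x) ^ 2 := by
  by_cases hF : (∫⁻ x, f x) = 0
  · simp [hF]
  by_cases hG : (∫⁻ x, g x) = 0
  · simp [hG]
  set a := ⨆ x, f x with ha
  set b := ⨆ x, g x with hb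
  have ha0 : a ≠ 0 := by
    intro h0
    apply hF
    have : f = fun _ => 0 := funext fun x =>
      le_antisymm (le_trans (le_iSup f x) (le_of_eq h0)) zero_le
    simp [this]
  have hb0 : b ≠ 0 := by
    intro h0
    apply hG
    have : g = fun _ => 0 := funext fun x =>
      le_antisymm (le_trans (le_iSup g x) (le_of_eq h0)) zero_le
    simp [this]
  have haT : a ≠ ∞ := ((iSup_le hfb).trans_lt hN.lt_top).ne
  have hbT : b ≠ ∞ := ((iSup_le hgb).trans_lt hN.lt_top).ne
  have hab0 : a * b ≠ 0 := mul_ne_zero ha0 hb0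
  have habT : a * b ≠ ∞ := ENNReal.mul_ne_top haT hbT
  set c := (a * b) ^ ((2:ℝ)⁻¹) with hc
  have csq : c ^ 2 = a * b := by
    rw [hc, ← ENNReal.rpow_natCast _ 2, ← ENNReal.rpow_mul]
    norm_num
  have hc0 : c ≠ 0 := by
    intro h0
    rw [h0] at csq
    simp only [ne_eq] at hab0
    exact hab0 (by simpa using csq.symm)
  have hcT : c ≠ ∞ := by
    intro h0
    rw [h0] at csq
    exact habT (by simpa using csq.symm)
  set f' := fun x => f x / a with hf'
  set g' := fun x => g x / b with hg'
  set h' := fun x => min (h x / c) 1 with hh'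
  have key : (∫⁻ x, f' x) + (∫⁻ x, g' x) ≤ 2 * ∫⁻ x, h' x := by
    apply pl_one_norm (hf.div_const a) (hg.div_const b) ((hh.div_const c).min measurable_const)
    · intro x
      rw [ENNReal.div_le_iff ha0 haT, one_mul]
      exact le_iSup f x
    · intro x
      rw [ENNReal.div_le_iff hb0 hbT, one_mul]
      exact le_iSup g x
    · intro x; exact min_le_right _ _
    · intro s hs
      have : s * a < a := by
        calc s * a < 1 * a := (ENNReal.mul_lt_mul_iff_left ha0 haT).2 hs
          _ = a := one_mul a
      obtain ⟨x, hx⟩ := lt_iSup_iff.1 (lt_of_lt_of_le this (le_of_eq ha))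
      exact ⟨x, (ENNReal.lt_div_iff_mul_lt (Or.inl ha0) (Or.inl haT)).2 hx⟩
    · intro s hs
      have : s * b < b := by
        calc s * b < 1 * b := (ENNReal.mul_lt_mul_iff_left hb0 hbT).2 hs
          _ = b := one_mul b
      obtain ⟨x, hx⟩ := lt_iSup_iff.1 (lt_of_lt_of_le this (le_of_eq hb))
      exact ⟨x, (ENNReal.lt_div_iff_mul_lt (Or.inl hb0) (Or.inl hbT)).2 hx⟩
    · intro x y
      rw [ennreal_min_sq]
      apply le_min
      · have heq : f x / a * (g y / b) = (f x * g y) / (a * b) := by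
          simp only [div_eq_mul_inv, ENNReal.mul_inv (Or.inl ha0) (Or.inl haT)]
          ring
        show f x / a * (g y / b) ≤ _
        rw [heq, div_eq_mul_inv, div_eq_mul_inv, mul_pow, ← ENNReal.inv_pow, csq]
        exact mul_le_mul_left (hyp x y) _
      · have h1 : f x / a ≤ 1 := by
          rw [ENNReal.div_le_iff ha0 haT, one_mul]; exact le_iSup f x
        have h2 : g y / b ≤ 1 := by
          rw [ENNReal.div_le_iff hb0 hbT, one_mul]; exact le_iSup g y
        exact mul_le_one' h1 h2
  -- integrals of the normalized functions
  have hif : ∫⁻ x, f' x = (∫⁻ x, f x) / a := by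
    simp only [hf', div_eq_mul_inv]
    exact lintegral_mul_const' a⁻¹ f (by simp [ha0])
  have hig : ∫⁻ x, g' x = (∫⁻ x, g x) / b := by
    simp only [hg', div_eq_mul_inv]
    exact lintegral_mul_const' b⁻¹ g (by simp [hb0])
  have hih : ∫⁻ x, h' x ≤ (∫⁻ x, h x) / c := by
    calc ∫⁻ x, h' x ≤ ∫⁻ x, h x / c := lintegral_mono fun x => min_le_left _ _
      _ = (∫⁻ x, h x) / c := by
        simp only [div_eq_mul_inv]
        exact lintegral_mul_const' c⁻¹ h (by simp [hc0])
  set F := ∫⁻ x, f x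
  set G := ∫⁻ x, g x
  set H := ∫⁻ x, h x
  have main : F / a + G / b ≤ 2 * (H / c) := by
    rw [← hif, ← hig]
    exact key.trans (by gcongr)
  have step1 : 4 * ((F / a) * (G / b)) ≤ (2 * (H / c)) ^ 2 :=
    (ennreal_amgm _ _).trans (pow_le_pow_left' main 2)
  have step2 : (F / a) * (G / b) = (F * G) / (a * b) := by
    simp only [div_eq_mul_inv, ENNReal.mul_inv (Or.inl ha0) (Or.inl haT)]
    ring
  have step3 : (2 * (H / c)) ^ 2 = 4 * (H ^ 2 / (a * b)) := by
    rw [mul_pow, div_eq_mul_inv, mul_pow, ← ENNReal.inv_pow, csq, ← div_eq_mul_inv]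
    norm_num
  rw [step2, step3] at step1
  have step4 : (F * G) / (a * b) ≤ H ^ 2 / (a * b) := by
    have h4 : (4 : ℝ≥0∞) ≠ 0 := by norm_num
    have h4T : (4 : ℝ≥0∞) ≠ ∞ := by norm_num
    exact (ENNReal.mul_le_mul_iff_right h4 h4T).1 step1
  calc F * G = (F * G) / (a * b) * (a * b) := (ENNReal.div_mul_cancel hab0 habT).symm
    _ ≤ H ^ 2 / (a * b) * (a * b) := mul_le_mul_left step4 _
    _ = H ^ 2 := ENNReal.div_mul_cancel hab0 habT

/-- Full 1-d Prékopa–Leindler. -/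
theorem isPL_real : IsPL (volume : Measure ℝ) (fun x y => (2:ℝ)⁻¹ * (x + y)) := by
  intro f g h hf hg hh hyp
  have key : ∀ k : ℕ, (∫⁻ x, min (f x) k) * (∫⁻ x, min (g x) k) ≤ (∫⁻ x, h x) ^ 2 := by
    intro k
    apply pl_one_bdd (hf.min measurable_const) (hg.min measurable_const) hh
      (k : ℝ≥0∞) (ENNReal.natCast_ne_top k) (fun x => min_le_right _ _) (fun x => min_le_right _ _)
    intro x y
    exact le_trans (mul_le_mul' (min_le_left _ _) (min_le_left _ _)) (hyp x y)
  have hsup : ∀ (u : ℝ → ℝ≥0∞), Measurable u →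
      (∫⁻ x, u x) = ⨆ k : ℕ, ∫⁻ x, min (u x) (k : ℝ≥0∞) := by
    intro u hu
    rw [← lintegral_iSup (fun k => hu.min measurable_const)
      (fun i j hij x => min_le_min le_rfl (by exact_mod_cast Nat.cast_le.2 hij))]
    exact lintegral_congr fun x => (ennreal_iSup_min_nat (u x)).symm
  rw [hsup f hf, hsup g hg, ENNReal.iSup_mul]
  apply iSup_le
  intro j
  rw [ENNReal.mul_iSup]
  apply iSup_le
  intro k
  calc (∫⁻ x, min (f x) j) * ∫⁻ x, min (g x) k
      ≤ (∫⁻ x, min (f x) (max j k : ℕ)) * ∫⁻ x, min (g x) (max j k : ℕ) := by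
        gcongr with x <;> [exact le_sup_left; exact le_sup_right]
    _ ≤ (∫⁻ x, h x) ^ 2 := key (max j k)
theorem isPL_pi : ∀ n : ℕ, IsPL (volume : Measure (Fin n → ℝ))
    (fun x y i => (2:ℝ)⁻¹ * (x i + y i)) := by
  intro n
  induction n with
  | zero =>
      intro f g h hf hg hh hyp
      have huniv : (volume : Measure (Fin 0 → ℝ)) Set.univ = 1 := by
        simp [MeasureTheory.volume_pi, Measure.pi_univ]
      have hlint : ∀ u : (Fin 0 → ℝ) → ℝ≥0∞, ∫⁻ x, u x = u default := by
        intro u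
        calc ∫⁻ x, u x = ∫⁻ _, u default := lintegral_congr fun x => by
              rw [Subsingleton.elim x default]
          _ = u default := by rw [lintegral_const, huniv, mul_one]
      rw [hlint f, hlint g, hlint h]
      have harg := hyp default default
      have hmid : h ((fun (x y : Fin 0 → ℝ) i => (2:ℝ)⁻¹ * (x i + y i)) default default) = h default := by
        congr 1
        exact Subsingleton.elim _ _
      rw [hmid] at harg
      exact harg
  | succ n ih =>
      have hprod := IsPL.prod isPL_real ih
      set e := MeasurableEquiv.piFinSuccAbove (fun _ : Fin (n+1) => ℝ) 0 with he
      have hmp : MeasurePreserving e.symm ((volume : Measure ℝ).prod volume) volume :=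
        (volume_preserving_piFinSuccAbove (fun _ : Fin (n + 1) => ℝ) 0).symm
      apply IsPL.of_equiv e.symm hmp _ hprod
      intro p q
      apply funext
      intro i
      induction i using Fin.cases with
      | zero =>
          simp [he, MeasurableEquiv.piFinSuccAbove_symm_apply]
      | succ j =>
          simp [he, MeasurableEquiv.piFinSuccAbove_symm_apply]

theorem isPL_euclidean (n : ℕ) : IsPL (volume : Measure (EuclideanSpace ℝ (Fin n)))
    (fun x y => (2:ℝ)⁻¹ • (x + y)) := by
  set e := MeasurableEquiv.toLp 2 (Fin n → ℝ) with he
  have hmp : MeasurePreserving e volume volume :=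
    (EuclideanSpace.volume_preserving_symm_measurableEquiv_toLp (Fin n)).symm
  apply IsPL.of_equiv e hmp _ (isPL_pi n)
  intro x y
  rfl
/-- Midpoint strong convexity from a Hessian lower bound. -/
theorem strong_midpoint {n : ℕ} {V : EuclideanSpace ℝ (Fin n) → ℝ}
    (hV : ContDiff ℝ 2 V) {t : ℝ}
    (hhess : ∀ x u : EuclideanSpace ℝ (Fin n),
      t * ‖u‖ ^ 2 ≤ iteratedFDeriv ℝ 2 V x ![u, u])
    (x y : EuclideanSpace ℝ (Fin n)) :
    V ((2:ℝ)⁻¹ • (x + y)) ≤ (V x + V y) / 2 - t / 8 * ‖x - y‖ ^ 2 := by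
  set d : EuclideanSpace ℝ (Fin n) := y - x with hd
  set c : ℝ := t * ‖d‖ ^ 2 with hc
  set γ : ℝ → EuclideanSpace ℝ (Fin n) := fun s => x + s • d with hγdef
  have hγ : ∀ s : ℝ, HasDerivAt γ d s := by
    intro s
    simpa only [one_smul] using ((hasDerivAt_id' s).smul_const d).const_add x
  have hVd : Differentiable ℝ V := hV.differentiable (by norm_num)
  set φ : ℝ → ℝ := fun s => V (γ s) with hφdef
  have hφ' : ∀ s, HasDerivAt φ (fderiv ℝ V (γ s) d) s := by
    intro s
    exact (hVd (γ s)).hasFDerivAt.comp_hasDerivAt s (hγ s)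
  set F := fderiv ℝ V with hFdef
  have hF : ContDiff ℝ 1 F := hV.fderiv_right (by norm_num)
  have hFd : Differentiable ℝ F := hF.differentiable (by norm_num)
  have hφ'' : ∀ s, HasDerivAt (fun s => F (γ s) d) (fderiv ℝ F (γ s) d d) s := by
    intro s
    have h1 : HasDerivAt (fun s => F (γ s)) (fderiv ℝ F (γ s) d) s :=
      (hFd (γ s)).hasFDerivAt.comp_hasDerivAt s (hγ s)
    have h2 := h1.clm_apply (hasDerivAt_const s d)
    simpa using h2
  have hΦ : ∀ s, c ≤ fderiv ℝ F (γ s) d d := by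
    intro s
    have := hhess (γ s) d
    rw [iteratedFDeriv_two_apply] at this
    simpa [hFdef] using this
  set ψ : ℝ → ℝ := fun s => φ s - c * s ^ 2 / 2 with hψdef
  have hψ' : ∀ s, HasDerivAt ψ (F (γ s) d - c * s) s := by
    intro s
    have h2 : HasDerivAt (fun s : ℝ => c * s ^ 2 / 2) (c * s) s := by
      have := ((hasDerivAt_pow 2 s).const_mul c).div_const 2
      exact this.congr_deriv (by ring)
    exact (hφ' s).sub h2
  have hψ'' : ∀ s, HasDerivAt (fun s => F (γ s) d - c * s) (fderiv ℝ F (γ s) d d - c) s := by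
    intro s
    exact (hφ'' s).sub (((hasDerivAt_id s).const_mul c).congr_deriv (mul_one c))
  have hderiv1 : deriv ψ = fun s => F (γ s) d - c * s := funext fun s => (hψ' s).deriv
  have hconv : ConvexOn ℝ Set.univ ψ := by
    apply convexOn_univ_of_deriv2_nonneg
    · exact fun s => (hψ' s).differentiableAt
    · intro s
      rw [hderiv1]
      exact (hψ'' s).differentiableAt
    · intro s
      have heq : deriv^[2] ψ s = fderiv ℝ F (γ s) d d - c := by
        show deriv (deriv ψ) s = _
        rw [hderiv1]
        exact (hψ'' s).deriv
      rw [heq]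
      linarith [hΦ s]
  have hmid := hconv.2 (Set.mem_univ (0:ℝ)) (Set.mem_univ (1:ℝ))
    (by norm_num : (0:ℝ) ≤ 2⁻¹) (by norm_num : (0:ℝ) ≤ 2⁻¹) (by norm_num)
  simp only [smul_eq_mul, mul_zero, mul_one, zero_add] at hmid
  have hγ0 : γ (0:ℝ) = x := by
    rw [hγdef]
    show x + (0:ℝ) • d = x
    rw [zero_smul, add_zero]
  have hγ1 : γ (1:ℝ) = y := by
    rw [hγdef]
    show x + (1:ℝ) • d = y
    rw [one_smul, hd]
    abel
  have hγhalf : γ ((2:ℝ)⁻¹) = (2:ℝ)⁻¹ • (x + y) := by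
    rw [hγdef]
    show x + (2:ℝ)⁻¹ • d = (2:ℝ)⁻¹ • (x + y)
    rw [hd]
    module
  have hψ0 : ψ 0 = V x := by simp [hψdef, hφdef, hγ0]
  have hψ1 : ψ 1 = V y - c / 2 := by
    simp only [hψdef, hφdef, hγ1, one_pow, mul_one]
  have hψhalf : ψ ((2:ℝ)⁻¹) = V ((2:ℝ)⁻¹ • (x + y)) - c / 8 := by
    simp only [hψdef, hφdef, hγhalf]
    ring_nf
  rw [hψhalf, hψ0, hψ1] at hmid
  have hceq : c = t * ‖x - y‖ ^ 2 := by rw [hc, norm_sub_rev]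
  rw [hceq] at hmid
  linarith
/-- If `μ = e^{-V} dx` is a `t`-strongly log-concave probability measure on `ℝⁿ`
(`∇²V ≥ t·Id`), then for every measurable `S` with `μ S > 0` and every `r > 0`,
`μ((S_r)ᶜ) ≤ (1/μ(S)) exp(-t r²/4)`, where `S_r` is the Euclidean `r`-extension of `S`. -/
theorem strongly_logconcave_concentration (n : ℕ)
    (V : EuclideanSpace ℝ (Fin n) → ℝ) (hV : ContDiff ℝ 2 V)
    (hVconv : ConvexOn ℝ Set.univ V)
    (t : ℝ) (ht : 0 < t)
    (hhess : ∀ x u : EuclideanSpace ℝ (Fin n),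
      t * ‖u‖ ^ 2 ≤ iteratedFDeriv ℝ 2 V x ![u, u])
    (μ : Measure (EuclideanSpace ℝ (Fin n)))
    (hμ : μ = volume.withDensity fun x => ENNReal.ofReal (Real.exp (-V x)))
    [IsProbabilityMeasure μ]
    (S : Set (EuclideanSpace ℝ (Fin n))) (hS : MeasurableSet S) (hSpos : 0 < μ S)
    (r : ℝ) (hr : 0 < r) :
    μ (Metric.cthickening r S)ᶜ ≤ (μ S)⁻¹ * ENNReal.ofReal (Real.exp (-(t * r ^ 2) / 4)) := by
  set T := (Metric.cthickening r S)ᶜ with hT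
  have hTm : MeasurableSet T := (Metric.isClosed_cthickening).measurableSet.compl
  set ρ : EuclideanSpace ℝ (Fin n) → ℝ≥0∞ := fun x => ENNReal.ofReal (Real.exp (-V x)) with hρ
  have hρm : Measurable ρ := (hV.continuous.neg.rexp).measurable.ennreal_ofReal
  set K : ℝ≥0∞ := ENNReal.ofReal (Real.exp (-(t * r ^ 2) / 8)) with hK
  set f := S.indicator ρ with hf
  set g := T.indicator ρ with hg
  set h := fun x => K * ρ x with hh
  have hyp : ∀ x y, f x * g y ≤ (h ((2:ℝ)⁻¹ • (x + y))) ^ 2 := by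
    intro x y
    by_cases hx : x ∈ S
    · by_cases hy : y ∈ T
      · rw [hf, hg, Set.indicator_of_mem hx, Set.indicator_of_mem hy]
        -- distance bound
        have hdist : r < dist x y := by
          have hy' : ¬ EMetric.infEdist y S ≤ ENNReal.ofReal r := hy
          push_neg at hy'
          have h1 : EMetric.infEdist y S ≤ edist y x := EMetric.infEdist_le_edist_of_mem hx
          have h2 : ENNReal.ofReal r < edist y x := lt_of_lt_of_le hy' h1
          rw [edist_dist] at h2
          rw [dist_comm]
          exact (ENNReal.ofReal_lt_ofReal_iff_of_nonneg hr.le).1 h2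
        have hnorm : r ^ 2 ≤ ‖x - y‖ ^ 2 := by
          have : r ≤ ‖x - y‖ := by rw [← dist_eq_norm]; exact hdist.le
          exact pow_le_pow_left₀ hr.le this 2
        have hmid := strong_midpoint hV hhess x y
        have hVm : V ((2:ℝ)⁻¹ • (x + y)) ≤ (V x + V y) / 2 - t * r ^ 2 / 8 := by
          have : t / 8 * r ^ 2 ≤ t / 8 * ‖x - y‖ ^ 2 := by
            apply mul_le_mul_of_nonneg_left hnorm
            positivity
          linarith
        simp only [hρ, hh, hK]
        rw [← ENNReal.ofReal_mul (Real.exp_nonneg _), ← ENNReal.ofReal_mul (Real.exp_nonneg _),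
          ← ENNReal.ofReal_pow (by positivity), ← Real.exp_add, ← Real.exp_add]
        apply ENNReal.ofReal_le_ofReal
        rw [← Real.exp_nat_mul]
        apply Real.exp_le_exp.2
        push_cast
        linarith
      · rw [hg, Set.indicator_of_notMem hy, mul_zero]
        exact zero_le
    · rw [hf, Set.indicator_of_notMem hx, zero_mul]
      exact zero_le
  have hPL := isPL_euclidean n f g h (hρm.indicator hS) (hρm.indicator hTm)
    (measurable_const.mul hρm) hyp
  have hμS : ∫⁻ x, f x = μ S := by
    rw [hf, lintegral_indicator hS, hμ, withDensity_apply _ hS]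
  have hμT : ∫⁻ x, g x = μ T := by
    rw [hg, lintegral_indicator hTm, hμ, withDensity_apply _ hTm]
  have hμuniv : ∫⁻ x, ρ x = 1 := by
    have : μ Set.univ = 1 := measure_univ
    rw [hμ, withDensity_apply _ MeasurableSet.univ] at this
    simpa [Measure.restrict_univ] using this
  have hμh : ∫⁻ x, h x = K := by
    rw [hh, lintegral_const_mul K hρm, hμuniv, mul_one]
  rw [hμS, hμT, hμh] at hPL
  have hK2 : K ^ 2 = ENNReal.ofReal (Real.exp (-(t * r ^ 2) / 4)) := by
    rw [hK, ← ENNReal.ofReal_pow (Real.exp_nonneg _), ← Real.exp_nat_mul]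
    congr 1
    push_cast
    ring_nf
  rw [hK2] at hPL
  have hμSne : μ S ≠ 0 := hSpos.ne'
  have hμSfin : μ S ≠ ∞ := measure_ne_top μ S
  calc μ T = (μ S)⁻¹ * (μ S * μ T) := by
        rw [← mul_assoc, ENNReal.inv_mul_cancel hμSne hμSfin, one_mul]
    _ ≤ (μ S)⁻¹ * ENNReal.ofReal (Real.exp (-(t * r ^ 2) / 4)) :=
        mul_le_mul_right hPL _
end

section
/- If a probability measure μ on ℝⁿ satisfies a Poincaré inequality with constant c_P (i.e., Var_μ(f) ≤ c_P² E_μ(|∇f|²) for all locally Lipschitz f), then its concentration function satisfies α_μ(r) ≤ exp(-r/(3 c_P)) for all r > 0. -/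
open MeasureTheory ProbabilityTheory Metric
open scoped ENNReal

lemma gm_key_step {n : ℕ} (μ : Measure (EuclideanSpace ℝ (Fin n))) [IsProbabilityMeasure μ]
    (cP : ℝ) (hcP : 0 < cP)
    (hpoincare : ∀ f : EuclideanSpace ℝ (Fin n) → ℝ, LocallyLipschitz f →
      variance f μ ≤ cP ^ 2 * ∫ x, ‖fderiv ℝ f x‖ ^ 2 ∂μ)
    (A : Set (EuclideanSpace ℝ (Fin n))) (hAm : MeasurableSet A) (hAne : A.Nonempty)
    (hAμ : 1 / 2 ≤ (μ A).toReal) :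
    (μ (cthickening (2 * cP) A)ᶜ).toReal ≤ (μ Aᶜ).toReal / 3 := by
  set h : ℝ := 2 * cP with hh_def
  have hh : 0 < h := by positivity
  set B : Set (EuclideanSpace ℝ (Fin n)) := cthickening h A with hB_def
  have hBm : MeasurableSet B := isClosed_cthickening.measurableSet
  have hAB : A ⊆ B := self_subset_cthickening A
  set f : EuclideanSpace ℝ (Fin n) → ℝ := fun x => min (infDist x A) h with hf_def
  have hf_lip : LipschitzWith 1 f := (lipschitz_infDist_pt A).min_const h
  have hf0 : ∀ x, 0 ≤ f x := fun x => le_min infDist_nonneg hh.le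
  have hfh : ∀ x, f x ≤ h := fun x => min_le_right _ _
  have hfA : ∀ x ∈ A, f x = 0 := fun x hx => by
    simp [hf_def, infDist_zero_of_mem hx, hh.le]
  have hfB : ∀ x ∉ B, f x = h := by
    intro x hx
    have : h ≤ infDist x A := by
      by_contra hlt
      push_neg at hlt
      exact hx (thickening_subset_cthickening h A
        ((mem_thickening_iff_infDist_lt hAne).2 hlt))
    simp [hf_def, min_eq_right this]
  -- derivative vanishes on A and off B
  have hderivA : ∀ x ∈ A, fderiv ℝ f x = 0 := fun x hx =>
    IsLocalMin.fderiv_eq_zero (Filter.Eventually.of_forall fun y => by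
      rw [hfA x hx]; exact hf0 y)
  have hderivB : ∀ x ∉ B, fderiv ℝ f x = 0 := fun x hx =>
    IsLocalMax.fderiv_eq_zero (Filter.Eventually.of_forall fun y => by
      rw [hfB x hx]; exact hfh y)
  have hderiv_le : ∀ x, ‖fderiv ℝ f x‖ ≤ 1 := fun x => by
    simpa using norm_fderiv_le_of_lipschitz ℝ hf_lip (x₀ := x)
  set D : Set (EuclideanSpace ℝ (Fin n)) := Aᶜ ∩ B with hD_def
  have hDm : MeasurableSet D := hAm.compl.inter hBm
  -- pointwise bound on the squared gradient
  have hpt : ∀ x, ‖fderiv ℝ f x‖ ^ 2 ≤ D.indicator (fun _ => (1 : ℝ)) x := by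
    intro x
    by_cases hxA : x ∈ A
    · simp [hderivA x hxA, Set.indicator_nonneg (fun _ _ => one_pos.le)]
    by_cases hxB : x ∈ B
    · have hxD : x ∈ D := ⟨hxA, hxB⟩
      rw [Set.indicator_of_mem hxD]
      calc ‖fderiv ℝ f x‖ ^ 2 ≤ 1 ^ 2 :=
            pow_le_pow_left₀ (norm_nonneg _) (hderiv_le x) 2
        _ = 1 := one_pow 2
    · simp [hderivB x hxB, Set.indicator_nonneg (fun _ _ => one_pos.le)]
  -- the gradient term is at most μ D
  have hmeas_g : Measurable fun x => ‖fderiv ℝ f x‖ ^ 2 :=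
    (measurable_fderiv ℝ f).norm.pow_const 2
  have hint_g : Integrable (fun x => ‖fderiv ℝ f x‖ ^ 2) μ := by
    refine Integrable.mono' (integrable_const 1) hmeas_g.aestronglyMeasurable ?_
    refine Filter.Eventually.of_forall fun x => ?_
    rw [Real.norm_eq_abs, abs_of_nonneg (by positivity)]
    calc ‖fderiv ℝ f x‖ ^ 2 ≤ 1 ^ 2 := pow_le_pow_left₀ (norm_nonneg _) (hderiv_le x) 2
      _ = 1 := one_pow 2
  have hgrad : ∫ x, ‖fderiv ℝ f x‖ ^ 2 ∂μ ≤ (μ D).toReal := by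
    have h1 : ∫ x, ‖fderiv ℝ f x‖ ^ 2 ∂μ ≤ ∫ x, D.indicator (fun _ => (1 : ℝ)) x ∂μ :=
      integral_mono hint_g ((integrable_const 1).indicator hDm) hpt
    rwa [integral_indicator_const (1 : ℝ) hDm, smul_eq_mul, mul_one] at h1
  -- variance lower bound
  have hf_meas : AEStronglyMeasurable f μ := hf_lip.continuous.aestronglyMeasurable
  have hMem : MemLp f 2 μ := by
    refine MemLp.of_bound hf_meas h (Filter.Eventually.of_forall fun x => ?_)
    rw [Real.norm_eq_abs, abs_of_nonneg (hf0 x)]; exact hfh x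
  set m : ℝ := ∫ x, f x ∂μ with hm_def
  set a : ℝ := (μ A).toReal with ha_def
  set b : ℝ := (μ Bᶜ).toReal with hb_def
  have hvar_lb : a * m ^ 2 + b * (h - m) ^ 2 ≤ variance f μ := by
    have hveq : variance f μ = ∫ x, (f x - m) ^ 2 ∂μ := by
      rw [variance_eq_integral hMem.1.aemeasurable]
    have hint1 : Integrable (fun x => (f x - m) ^ 2) μ := by
      have := (hMem.sub (memLp_const m)).integrable_sq
      simpa [Pi.sub_apply] using this
    have hptv : ∀ x, A.indicator (fun _ => m ^ 2) x + Bᶜ.indicator (fun _ => (h - m) ^ 2) x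
        ≤ (f x - m) ^ 2 := by
      intro x
      by_cases hxA : x ∈ A
      · have hxB : x ∉ Bᶜ := fun hc => hc (hAB hxA)
        rw [Set.indicator_of_mem hxA, Set.indicator_of_notMem hxB, add_zero, hfA x hxA]
        simp
      by_cases hxB : x ∈ Bᶜ
      · rw [Set.indicator_of_notMem hxA, Set.indicator_of_mem hxB, zero_add, hfB x hxB]
      · rw [Set.indicator_of_notMem hxA, Set.indicator_of_notMem hxB, add_zero]
        positivity
    have hint2 : Integrable (fun x => A.indicator (fun _ => m ^ 2) x
        + Bᶜ.indicator (fun _ => (h - m) ^ 2) x) μ :=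
      (((integrable_const _).indicator hAm).add ((integrable_const _).indicator hBm.compl))
    have := integral_mono hint2 hint1 hptv
    rw [integral_add ((integrable_const _).indicator hAm)
        ((integrable_const _).indicator hBm.compl),
      integral_indicator_const _ hAm, integral_indicator_const _ hBm.compl,
      smul_eq_mul, smul_eq_mul] at this
    rw [hveq]
    calc a * m ^ 2 + b * (h - m) ^ 2
        = (μ A).toReal * m ^ 2 + (μ Bᶜ).toReal * (h - m) ^ 2 := by rfl
      _ ≤ _ := this
  -- combine with Poincaré
  have hpoin := hpoincare f (hf_lip.locallyLipschitz)
  have hchain : a * m ^ 2 + b * (h - m) ^ 2 ≤ cP ^ 2 * (μ D).toReal :=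
    hvar_lb.trans (hpoin.trans (by
      have := hgrad
      nlinarith [sq_nonneg cP]))
  -- measure arithmetic
  have hfin : ∀ s : Set (EuclideanSpace ℝ (Fin n)), μ s ≠ ⊤ := fun s => measure_ne_top μ s
  have hsplit : μ Aᶜ = μ D + μ Bᶜ := by
    have hU : Aᶜ = D ∪ Bᶜ := by
      rw [hD_def]
      ext x
      constructor
      · intro hx
        by_cases hxB : x ∈ B
        · exact Or.inl ⟨hx, hxB⟩
        · exact Or.inr hxB
      · rintro (⟨hx, _⟩ | hx)
        · exact hx
        · exact fun hc => hx (hAB hc)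
    rw [hU, measure_union _ hBm.compl]
    exact Set.disjoint_left.2 fun x hx hx2 => hx2 hx.2
  have hsplit' : (μ Aᶜ).toReal = (μ D).toReal + b := by
    rw [hsplit, ENNReal.toReal_add (hfin _) (hfin _)]
  have hcompl : a + (μ Aᶜ).toReal = 1 := by
    rw [ha_def, ← ENNReal.toReal_add (hfin _) (hfin _), measure_add_measure_compl hAm,
      measure_univ, ENNReal.toReal_one]
  have hb_nonneg : 0 ≤ b := ENNReal.toReal_nonneg
  have hd_nonneg : 0 ≤ (μ D).toReal := ENNReal.toReal_nonneg
  have hb_le : b ≤ 1 / 2 := by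
    have : b ≤ (μ Aᶜ).toReal := by
      rw [hb_def]
      exact ENNReal.toReal_mono (hfin _) (measure_mono fun x hx => fun hc => hx (hAB hc))
    linarith
  -- final algebra
  rw [hh_def] at hchain
  have h1 : 1 / 2 * m ^ 2 + b * (2 * cP - m) ^ 2 ≤ cP ^ 2 * ((μ Aᶜ).toReal - b) := by
    nlinarith [hchain, hsplit', mul_le_mul_of_nonneg_right hAμ (sq_nonneg m)]
  have h2 : 2 * b * cP ^ 2 ≤ 1 / 2 * m ^ 2 + b * (2 * cP - m) ^ 2 := by
    nlinarith [sq_nonneg ((1 + 2 * b) * m - 4 * b * cP),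
      mul_nonneg (mul_nonneg hb_nonneg (sq_nonneg cP)) (by linarith : (0:ℝ) ≤ 1 - 2 * b)]
  nlinarith [mul_pos hcP hcP]


theorem gm_main {n : ℕ}
    (μ : Measure (EuclideanSpace ℝ (Fin n))) [IsProbabilityMeasure μ]
    (cP : ℝ) (hcP : 0 < cP)
    (hkey : ∀ A : Set (EuclideanSpace ℝ (Fin n)), MeasurableSet A → A.Nonempty →
      1 / 2 ≤ (μ A).toReal →
      (μ (cthickening (2 * cP) A)ᶜ).toReal ≤ (μ Aᶜ).toReal / 3) :
    ∀ S : Set (EuclideanSpace ℝ (Fin n)), MeasurableSet S → μ S = 1 / 2 → ∀ r : ℝ, 0 < r →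
      μ (Metric.cthickening r S)ᶜ ≤ ENNReal.ofReal (Real.exp (-r / (3 * cP))) := by
  intro S hS hμS r hr
  have hSne : S.Nonempty := nonempty_of_measure_ne_zero (by rw [hμS]; norm_num)
  have hfin : ∀ s : Set (EuclideanSpace ℝ (Fin n)), μ s ≠ ⊤ := fun s => measure_ne_top μ s
  have hprob : ∀ s : Set (EuclideanSpace ℝ (Fin n)), MeasurableSet s →
      (μ s).toReal + (μ sᶜ).toReal = 1 := by
    intro s hs
    rw [← ENNReal.toReal_add (hfin _) (hfin _), measure_add_measure_compl hs,
      measure_univ, ENNReal.toReal_one]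
  have hStoReal : (μ S).toReal = 1 / 2 := by
    rw [hμS]; simp [ENNReal.toReal_div]
  have hScompl : (μ Sᶜ).toReal = 1 / 2 := by
    have := hprob S hS; linarith
  have claim : ∀ k : ℕ, (μ (cthickening ((k : ℝ) * (2 * cP)) S)ᶜ).toReal
      ≤ 1 / 2 * (1 / 3) ^ k := by
    intro k
    induction k with
    | zero =>
      simp only [Nat.cast_zero, zero_mul, pow_zero, mul_one]
      calc (μ (cthickening 0 S)ᶜ).toReal ≤ (μ Sᶜ).toReal :=
            ENNReal.toReal_mono (hfin _)
              (measure_mono (Set.compl_subset_compl.2 (self_subset_cthickening S)))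
        _ = 1 / 2 := hScompl
    | succ k ih =>
      set A : Set (EuclideanSpace ℝ (Fin n)) := cthickening ((k : ℝ) * (2 * cP)) S with hA_def
      have hAm : MeasurableSet A := isClosed_cthickening.measurableSet
      have hAne : A.Nonempty := hSne.mono (self_subset_cthickening S)
      have hAμ : 1 / 2 ≤ (μ A).toReal := by
        have hc := hprob A hAm
        have hpow : (1 / 2 : ℝ) * (1 / 3) ^ k ≤ 1 / 2 := by
          have : ((1:ℝ) / 3) ^ k ≤ 1 := pow_le_one₀ (by norm_num) (by norm_num)
          linarith
        linarith
      have hk := hkey A hAm hAne hAμ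
      have hsub : cthickening (2 * cP) A ⊆ cthickening (((k + 1 : ℕ) : ℝ) * (2 * cP)) S := by
        refine (cthickening_cthickening_subset (by positivity)
          (by positivity) S).trans (cthickening_mono (le_of_eq (by push_cast; ring)) S)
      calc (μ (cthickening (((k + 1 : ℕ) : ℝ) * (2 * cP)) S)ᶜ).toReal
          ≤ (μ (cthickening (2 * cP) A)ᶜ).toReal :=
            ENNReal.toReal_mono (hfin _) (measure_mono (Set.compl_subset_compl.2 hsub))
        _ ≤ (μ Aᶜ).toReal / 3 := hk
        _ ≤ (1 / 2 * (1 / 3) ^ k) / 3 := by linarith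
        _ = 1 / 2 * (1 / 3) ^ (k + 1) := by rw [pow_succ]; ring
  set k : ℕ := ⌊r / (2 * cP)⌋₊ with hk_def
  have h2cP : (0:ℝ) < 2 * cP := by positivity
  have hk_le : (k : ℝ) * (2 * cP) ≤ r := by
    have := Nat.floor_le (le_of_lt (div_pos hr h2cP))
    calc (k : ℝ) * (2 * cP) ≤ (r / (2 * cP)) * (2 * cP) :=
          mul_le_mul_of_nonneg_right this h2cP.le
      _ = r := by field_simp
  have hmono : (μ (cthickening r S)ᶜ).toReal ≤ 1 / 2 * (1 / 3) ^ k :=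
    le_trans (ENNReal.toReal_mono (hfin _) (measure_mono
      (Set.compl_subset_compl.2 (cthickening_mono hk_le S)))) (claim k)
  have hexp23 : Real.exp (2 / 3) < 2 := by
    have h1 : (2 / 3 : ℝ) < Real.log 2 := lt_trans (by norm_num) Real.log_two_gt_d9
    calc Real.exp (2 / 3) < Real.exp (Real.log 2) := Real.exp_lt_exp.2 h1
      _ = 2 := Real.exp_log two_pos
  have hhalf : (1 / 2 : ℝ) ≤ Real.exp (-(2 / 3)) := by
    rw [Real.exp_neg]
    rw [div_le_iff₀ (by positivity)]
    rw [inv_mul_eq_div, le_div_iff₀ (Real.exp_pos _)]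
    linarith
  have hthird : (1 / 3 : ℝ) ≤ Real.exp (-(2 / 3)) := by
    rw [Real.exp_neg]
    rw [div_le_iff₀ (by positivity)]
    rw [inv_mul_eq_div, le_div_iff₀ (Real.exp_pos _)]
    linarith
  have hnum : 1 / 2 * ((1 : ℝ) / 3) ^ k ≤ Real.exp (-r / (3 * cP)) := by
    have ht : r / (2 * cP) < (k : ℝ) + 1 := Nat.lt_floor_add_one _
    have harg : -(2 / 3) * ((k : ℝ) + 1) ≤ -r / (3 * cP) := by
      have ht' : r < ((k : ℝ) + 1) * (2 * cP) := (div_lt_iff₀ h2cP).1 ht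
      rw [neg_div, neg_mul, neg_le_neg_iff, div_le_iff₀ (by positivity : (0:ℝ) < 3 * cP)]
      nlinarith
    calc 1 / 2 * ((1 : ℝ) / 3) ^ k
        ≤ Real.exp (-(2 / 3)) * Real.exp (-(2 / 3)) ^ k :=
          mul_le_mul hhalf (pow_le_pow_left₀ (by norm_num) hthird k)
            (by positivity) (Real.exp_nonneg _)
      _ = Real.exp (-(2 / 3) * ((k : ℝ) + 1)) := by
          rw [← Real.exp_nat_mul, ← Real.exp_add]; ring_nf
      _ ≤ Real.exp (-r / (3 * cP)) := Real.exp_le_exp.2 harg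
  rw [ENNReal.le_ofReal_iff_toReal_le (hfin _) (Real.exp_nonneg _)]
  linarith

/-- Gromov–Milman: if a probability measure `μ` on `ℝⁿ` satisfies a Poincaré inequality
with constant `c_P` (for all locally Lipschitz functions), then its concentration function
satisfies `α_μ(r) ≤ exp(-r/(3 c_P))` for all `r > 0`, i.e. `μ((S_r)ᶜ) ≤ exp(-r/(3 c_P))`
for every measurable `S` with `μ S = 1/2`. -/
theorem gromov_milman_exponential_concentration (n : ℕ)
    (μ : Measure (EuclideanSpace ℝ (Fin n))) [IsProbabilityMeasure μ]
    (cP : ℝ) (hcP : 0 < cP)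
    (hpoincare : ∀ f : EuclideanSpace ℝ (Fin n) → ℝ, LocallyLipschitz f →
      variance f μ ≤ cP ^ 2 * ∫ x, ‖fderiv ℝ f x‖ ^ 2 ∂μ) :
    ∀ S : Set (EuclideanSpace ℝ (Fin n)), MeasurableSet S → μ S = 1 / 2 → ∀ r : ℝ, 0 < r →
      μ (Metric.cthickening r S)ᶜ ≤ ENNReal.ofReal (Real.exp (-r / (3 * cP))) := by
  exact gm_main μ cP hcP (fun A hAm hAne hAμ => gm_key_step μ cP hcP hpoincare A hAm hAne hAμ)
end
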